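/- If f is continuous on [0,δ], thrice differentiable on (0,δ], f(0) = 0, and f''' is strictly decreasing on (0,δ], then the right-limit of f' at 0 is strictly greater than g₁ = g'(0), where g is the δ-smoothing of f. -/

import Mathlib

open Set Filter Topology

private lemma hasDerivAt_cubic (q0 q1 q2 q3 w d : ℝ)
    (hd : d = q1 + 2 * q2 * w + 3 * q3 * w ^ 2) :
    HasDerivAt (fun x : ℝ => q0 + q1 * x + q2 * x ^ 2 + q3 * x ^ 3) d w := by
  have h : HasDerivAt (fun x : ℝ => q0 + q1 * x + q2 * x ^ 2 + q3 * x ^ 3)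
      (0 + q1 * 1 + q2 * ((2 : ℕ) * w ^ (2 - 1)) + q3 * ((3 : ℕ) * w ^ (3 - 1))) w :=
    (((hasDerivAt_const w q0).add ((hasDerivAt_id w).const_mul q1)).add
      ((hasDerivAt_pow 2 w).const_mul q2)).add ((hasDerivAt_pow 3 w).const_mul q3)
  convert h using 1
  rw [hd]; norm_num; ring

private lemma hasDerivAt_quad (q0 q1 q2 w d : ℝ) (hd : d = q1 + 2 * q2 * w) :
    HasDerivAt (fun x : ℝ => q0 + q1 * x + q2 * x ^ 2) d w := by
  have h : HasDerivAt (fun x : ℝ => q0 + q1 * x + q2 * x ^ 2)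
      (0 + q1 * 1 + q2 * ((2 : ℕ) * w ^ (2 - 1))) w :=
    ((hasDerivAt_const w q0).add ((hasDerivAt_id w).const_mul q1)).add
      ((hasDerivAt_pow 2 w).const_mul q2)
  convert h using 1
  rw [hd]; norm_num; ring

private lemma hasDerivAt_lin (q0 q1 w : ℝ) :
    HasDerivAt (fun x : ℝ => q0 + q1 * x) q1 w := by
  have h : HasDerivAt (fun x : ℝ => q0 + q1 * x) (0 + q1 * 1) w :=
    (hasDerivAt_const w q0).add ((hasDerivAt_id w).const_mul q1)
  convert h using 1
  ring

/-- Strict monotonicity from a `HasDerivAt` bound on `Ioc 0 δ`. -/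
private lemma strictMonoOn_aux {A ρ : ℝ → ℝ} {δ : ℝ}
    (hA : ∀ w ∈ Ioc (0:ℝ) δ, HasDerivAt A (ρ w) w)
    (hρpos : ∀ w ∈ Ioo (0:ℝ) δ, 0 < ρ w) : StrictMonoOn A (Ioc 0 δ) := by
  apply strictMonoOn_of_deriv_pos (convex_Ioc 0 δ)
  · exact fun w hw => ((hA w hw).continuousAt.continuousWithinAt)
  · rw [interior_Ioc]
    intro w hw
    rw [(hA w (Ioo_subset_Ioc_self hw)).deriv]
    exact hρpos w hw

private lemma strictAntiOn_aux {A ρ : ℝ → ℝ} {δ : ℝ}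
    (hA : ∀ w ∈ Ioc (0:ℝ) δ, HasDerivAt A (ρ w) w)
    (hρneg : ∀ w ∈ Ioo (0:ℝ) δ, ρ w < 0) : StrictAntiOn A (Ioc 0 δ) := by
  apply strictAntiOn_of_deriv_neg (convex_Ioc 0 δ)
  · exact fun w hw => ((hA w hw).continuousAt.continuousWithinAt)
  · rw [interior_Ioc]
    intro w hw
    rw [(hA w (Ioo_subset_Ioc_self hw)).deriv]
    exact hρneg w hw

/-- Key abstract lemma: if `C' = B`, `B' = A`, `A' = ρ` on `(0, δ]`, with `ρ` strictly
decreasing and `ρ δ = C δ = B δ = A δ = 0`, and `C → C0`, `B → B0` at `0⁺`,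
then `0 < 3 C0 + δ B0`. -/
private lemma key_main {A B C ρ : ℝ → ℝ} {δ C0 B0 : ℝ} (hδ : 0 < δ)
    (hC : ∀ w ∈ Ioc (0:ℝ) δ, HasDerivAt C (B w) w)
    (hB : ∀ w ∈ Ioc (0:ℝ) δ, HasDerivAt B (A w) w)
    (hA : ∀ w ∈ Ioc (0:ℝ) δ, HasDerivAt A (ρ w) w)
    (hρ : StrictAntiOn ρ (Ioc 0 δ)) (hρδ : ρ δ = 0)
    (hCδ : C δ = 0) (hBδ : B δ = 0) (hAδ : A δ = 0)
    (hC0 : Tendsto C (𝓝[>] (0:ℝ)) (𝓝 C0))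
    (hB0 : Tendsto B (𝓝[>] (0:ℝ)) (𝓝 B0)) :
    0 < 3 * C0 + δ * B0 := by
  have hδIoc : δ ∈ Ioc (0:ℝ) δ := ⟨hδ, le_rfl⟩
  have hρpos : ∀ w ∈ Ioo (0:ℝ) δ, 0 < ρ w := by
    intro w hw
    have := hρ ⟨hw.1, hw.2.le⟩ hδIoc hw.2
    rwa [hρδ] at this
  have hAmono : StrictMonoOn A (Ioc 0 δ) := strictMonoOn_aux hA hρpos
  have hAneg : ∀ w ∈ Ioo (0:ℝ) δ, A w < 0 := by
    intro w hw
    have := hAmono ⟨hw.1, hw.2.le⟩ hδIoc hw.2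
    rwa [hAδ] at this
  set ρ0 : ℝ := ρ (2 * δ / 3) with hρ0
  set Θ : ℝ → ℝ := fun w => 3 * C w + (δ - 3 * w) * B w + (3 * w ^ 2 / 2 - δ * w) * A w
      - ρ0 * (w ^ 3 / 2 - δ * w ^ 2 / 2) with hΘ
  have hmid : (2 * δ / 3) ∈ Ioc (0:ℝ) δ := ⟨by linarith, by linarith⟩
  have hΘd : ∀ w ∈ Ioc (0:ℝ) δ,
      HasDerivAt Θ ((3 * w ^ 2 / 2 - δ * w) * (ρ w - ρ0)) w := by
    intro w hw
    have h1 : HasDerivAt (fun x => 3 * C x) (3 * B w) w := (hC w hw).const_mul 3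
    have hlin : HasDerivAt (fun x : ℝ => δ - 3 * x) (-(3 * 1)) w :=
      ((hasDerivAt_id w).const_mul 3).const_sub δ
    have h2 := hlin.mul (hB w hw)
    have hq : HasDerivAt (fun x : ℝ => 3 * x ^ 2 / 2 - δ * x)
        (3 * ((2:ℕ) * w ^ (2 - 1)) / 2 - δ * 1) w :=
      (((hasDerivAt_pow 2 w).const_mul (3:ℝ)).div_const 2).sub
        ((hasDerivAt_id w).const_mul δ)
    have h3 := hq.mul (hA w hw)
    have hcub : HasDerivAt (fun x : ℝ => ρ0 * (x ^ 3 / 2 - δ * x ^ 2 / 2))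
        (ρ0 * ((3:ℕ) * w ^ (3 - 1) / 2 - δ * ((2:ℕ) * w ^ (2-1)) / 2)) w :=
      (((hasDerivAt_pow 3 w).div_const 2).sub
        (((hasDerivAt_pow 2 w).const_mul δ).div_const 2)).const_mul ρ0
    have hsum := ((h1.add h2).add h3).sub hcub
    have hfun : HasDerivAt Θ ((3 * B w) + ((-(3 * 1)) * B w + (δ - 3 * w) * A w)
        + ((3 * ((2:ℕ) * w ^ (2 - 1)) / 2 - δ * 1) * A w + (3 * w ^ 2 / 2 - δ * w) * ρ w)
        - ρ0 * ((3:ℕ) * w ^ (3 - 1) / 2 - δ * ((2:ℕ) * w ^ (2-1)) / 2)) w := by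
      rw [hΘ]
      exact hsum
    convert hfun using 1
    norm_num; ring
  have hΘδ : Θ δ = 0 := by
    rw [hΘ]; simp only [hCδ, hBδ, hAδ]; ring
  -- Θ strictly decreasing on the two pieces
  have hsub1 : Ioc (0:ℝ) (2 * δ / 3) ⊆ Ioc 0 δ := Ioc_subset_Ioc_right (by linarith)
  have hsub2 : Icc (2 * δ / 3) δ ⊆ Ioc 0 δ := fun x hx => ⟨by linarith [hx.1], hx.2⟩
  have hanti1 : StrictAntiOn Θ (Ioc 0 (2 * δ / 3)) := by
    apply strictAntiOn_of_deriv_neg (convex_Ioc _ _)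
    · exact fun w hw => ((hΘd w (hsub1 hw)).continuousAt.continuousWithinAt)
    · rw [interior_Ioc]
      intro w hw
      rw [(hΘd w (hsub1 (Ioo_subset_Ioc_self hw))).deriv]
      have hw1 : (0:ℝ) < w := hw.1
      have hw2 : w < 2 * δ / 3 := hw.2
      have hneg : 3 * w ^ 2 / 2 - δ * w < 0 := by nlinarith
      have hpos : 0 < ρ w - ρ0 := by
        have := hρ ⟨hw1, by linarith⟩ hmid hw2
        linarith
      exact mul_neg_of_neg_of_pos hneg hpos
  have hanti2 : StrictAntiOn Θ (Icc (2 * δ / 3) δ) := by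
    apply strictAntiOn_of_deriv_neg (convex_Icc _ _)
    · exact fun w hw => ((hΘd w (hsub2 hw)).continuousAt.continuousWithinAt)
    · rw [interior_Icc]
      intro w hw
      rw [(hΘd w (hsub2 (Ioo_subset_Icc_self hw))).deriv]
      have hw1 : 2 * δ / 3 < w := hw.1
      have hw2 : w < δ := hw.2
      have hpos : 0 < 3 * w ^ 2 / 2 - δ * w := by nlinarith
      have hneg : ρ w - ρ0 < 0 := by
        have := hρ hmid ⟨by linarith, hw2.le⟩ hw1
        linarith
      exact mul_neg_of_pos_of_neg hpos hneg
  have hΘhalf : 0 < Θ (δ / 2) := by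
    have h23 : Θ δ < Θ (2 * δ / 3) :=
      hanti2 ⟨le_rfl, by linarith⟩ ⟨by linarith, le_rfl⟩ (by linarith)
    have hh : Θ (2 * δ / 3) < Θ (δ / 2) :=
      hanti1 ⟨by linarith, by linarith⟩ ⟨by linarith, le_rfl⟩ (by linarith)
    rw [hΘδ] at h23
    linarith
  -- limit of w * A w is 0
  have hhalf_tendsto : Tendsto (fun w : ℝ => w / 2) (𝓝[>] (0:ℝ)) (𝓝[>] (0:ℝ)) := by
    apply tendsto_nhdsWithin_of_tendsto_nhds_of_eventually_within
    · have : Tendsto (fun w : ℝ => w / 2) (𝓝 (0:ℝ)) (𝓝 (0 / 2)) :=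
        tendsto_id.div_const 2
      simpa using this.mono_left nhdsWithin_le_nhds
    · filter_upwards [self_mem_nhdsWithin] with w hw
      exact half_pos (Set.mem_Ioi.mp hw)
  have hBhalf : Tendsto (fun w : ℝ => B (w / 2)) (𝓝[>] (0:ℝ)) (𝓝 B0) :=
    hB0.comp hhalf_tendsto
  have hsq : ∀ w ∈ Ioo (0:ℝ) δ,
      0 ≤ -(w * A w) ∧ -(w * A w) ≤ 2 * (B (w / 2) - B w) := by
    intro w hw
    have hw1 : (0:ℝ) < w := hw.1
    have hw2 : w < δ := hw.2
    have hIccsub : Icc (w / 2) w ⊆ Ioc 0 δ := fun x hx =>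
      ⟨by linarith [hx.1, half_pos hw1], by linarith [hx.2]⟩
    obtain ⟨ξ, hξ, hslope⟩ := exists_hasDerivAt_eq_slope B A (by linarith : w / 2 < w)
      (fun x hx => (hB x (hIccsub hx)).continuousAt.continuousWithinAt)
      (fun x hx => hB x (hIccsub (Ioo_subset_Icc_self hx)))
    have hne : w - w / 2 ≠ 0 := ne_of_gt (by linarith)
    have hBdiff : B w - B (w / 2) = A ξ * (w - w / 2) := by
      rw [hslope, div_mul_cancel₀ _ hne]
    have hξmem : ξ ∈ Ioc (0:ℝ) δ := ⟨by linarith [hξ.1, half_pos hw1], by linarith [hξ.2]⟩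
    have hAξ : A ξ < A w := hAmono hξmem ⟨hw1, hw2.le⟩ hξ.2
    have hAw : A w < 0 := hAneg w hw
    constructor
    · nlinarith
    · nlinarith
  have hub : Tendsto (fun w : ℝ => 2 * (B (w / 2) - B w)) (𝓝[>] (0:ℝ)) (𝓝 0) := by
    have := (hBhalf.sub hB0).const_mul 2
    simpa using this
  have hnegwA : Tendsto (fun w : ℝ => -(w * A w)) (𝓝[>] (0:ℝ)) (𝓝 0) := by
    apply tendsto_of_tendsto_of_tendsto_of_le_of_le' tendsto_const_nhds hub
    · filter_upwards [Ioo_mem_nhdsGT_of_mem (by constructor <;> linarith : (0:ℝ) ∈ Ico 0 δ)]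
        with w hw
      exact (hsq w hw).1
    · filter_upwards [Ioo_mem_nhdsGT_of_mem (by constructor <;> linarith : (0:ℝ) ∈ Ico 0 δ)]
        with w hw
      exact (hsq w hw).2
  have hwA : Tendsto (fun w : ℝ => w * A w) (𝓝[>] (0:ℝ)) (𝓝 0) := by
    have := hnegwA.neg
    simpa using this
  -- limit of Θ
  have hΘlim : Tendsto Θ (𝓝[>] (0:ℝ)) (𝓝 (3 * C0 + δ * B0)) := by
    have t1 : Tendsto (fun w => 3 * C w) (𝓝[>] (0:ℝ)) (𝓝 (3 * C0)) := hC0.const_mul 3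
    have tlin : Tendsto (fun w : ℝ => δ - 3 * w) (𝓝[>] (0:ℝ)) (𝓝 δ) := by
      have : Tendsto (fun w : ℝ => δ - 3 * w) (𝓝 (0:ℝ)) (𝓝 (δ - 3 * 0)) :=
        (tendsto_const_nhds.sub (tendsto_id.const_mul 3))
      simpa using this.mono_left nhdsWithin_le_nhds
    have t2 : Tendsto (fun w => (δ - 3 * w) * B w) (𝓝[>] (0:ℝ)) (𝓝 (δ * B0)) :=
      tlin.mul hB0
    have tq : Tendsto (fun w : ℝ => 3 * w / 2 - δ) (𝓝[>] (0:ℝ)) (𝓝 (3 * 0 / 2 - δ)) := by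
      apply Tendsto.mono_left _ nhdsWithin_le_nhds
      exact ((tendsto_id.const_mul 3).div_const 2).sub tendsto_const_nhds
    have t3 : Tendsto (fun w => (3 * w ^ 2 / 2 - δ * w) * A w) (𝓝[>] (0:ℝ)) (𝓝 0) := by
      have := tq.mul hwA
      rw [show (3 * 0 / 2 - δ) * 0 = (0:ℝ) by ring] at this
      apply this.congr
      intro w; ring
    have t4 : Tendsto (fun w : ℝ => ρ0 * (w ^ 3 / 2 - δ * w ^ 2 / 2)) (𝓝[>] (0:ℝ)) (𝓝 0) := by
      have : Tendsto (fun w : ℝ => ρ0 * (w ^ 3 / 2 - δ * w ^ 2 / 2)) (𝓝 (0:ℝ))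
          (𝓝 (ρ0 * (0 ^ 3 / 2 - δ * 0 ^ 2 / 2))) := by
        apply Tendsto.const_mul
        exact ((tendsto_id.pow 3).div_const 2).sub (((tendsto_id.pow 2).const_mul δ).div_const 2)
      have h0 : ρ0 * ((0:ℝ) ^ 3 / 2 - δ * 0 ^ 2 / 2) = 0 := by ring
      rw [h0] at this
      exact this.mono_left nhdsWithin_le_nhds
    have := ((t1.add t2).add t3).sub t4
    rw [show 3 * C0 + δ * B0 + 0 - 0 = 3 * C0 + δ * B0 by ring] at this
    rw [hΘ]
    exact this
  -- conclude
  have hge : Θ (δ / 2) ≤ 3 * C0 + δ * B0 := by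
    apply ge_of_tendsto hΘlim
    filter_upwards [Ioo_mem_nhdsGT_of_mem
      (by constructor <;> linarith : (0:ℝ) ∈ Ico 0 (δ / 2))] with w hw
    exact (hanti1 ⟨hw.1, by linarith [hw.2]⟩ ⟨by linarith, by linarith⟩ hw.2).le
  linarith

theorem stmt_5 (f : ℝ → ℝ) (δ : ℝ) (hδ : 0 < δ) (hf0 : f 0 = 0)
    (hcont : ContinuousOn f (Set.Icc 0 δ))
    (hdiff : ∀ w ∈ Set.Ioc (0:ℝ) δ, DifferentiableAt ℝ f w ∧
      DifferentiableAt ℝ (deriv f) w ∧ DifferentiableAt ℝ (deriv (deriv f)) w)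
    (hanti : StrictAntiOn (deriv (deriv (deriv f))) (Set.Ioc 0 δ))
    (L : EReal)
    (hL : Filter.Tendsto (fun w : ℝ => (((deriv f w : ℝ) : EReal)))
      (nhdsWithin 0 (Set.Ioi 0)) (nhds L)) :
    ((3 * f δ / δ - 2 * deriv f δ + δ * deriv (deriv f) δ / 2 : ℝ) : EReal) < L := by
  set F := deriv f with hF
  set G := deriv (deriv f) with hG
  set H := deriv (deriv (deriv f)) with hH
  set p3 : ℝ := H δ / 6 with hp3
  set p2 : ℝ := (G δ - H δ * δ) / 2 with hp2
  set p1 : ℝ := F δ - 2 * p2 * δ - 3 * p3 * δ ^ 2 with hp1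
  set p0 : ℝ := f δ - p1 * δ - p2 * δ ^ 2 - p3 * δ ^ 3 with hp0
  set C : ℝ → ℝ := fun w => f w - (p0 + p1 * w + p2 * w ^ 2 + p3 * w ^ 3) with hCdef
  set B : ℝ → ℝ := fun w => F w - (p1 + 2 * p2 * w + 3 * p3 * w ^ 2) with hBdef
  set A : ℝ → ℝ := fun w => G w - (2 * p2 + 6 * p3 * w) with hAdef
  set ρ : ℝ → ℝ := fun w => H w - 6 * p3 with hρdef
  have hdC : ∀ w ∈ Set.Ioc (0:ℝ) δ, HasDerivAt C (B w) w := by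
    intro w hw
    have h1 : HasDerivAt f (F w) w := (hdiff w hw).1.hasDerivAt
    exact h1.sub (hasDerivAt_cubic p0 p1 p2 p3 w _ rfl)
  have hdB : ∀ w ∈ Set.Ioc (0:ℝ) δ, HasDerivAt B (A w) w := by
    intro w hw
    have h1 : HasDerivAt F (G w) w := (hdiff w hw).2.1.hasDerivAt
    exact h1.sub (hasDerivAt_quad p1 (2 * p2) (3 * p3) w _ (by ring))
  have hdA : ∀ w ∈ Set.Ioc (0:ℝ) δ, HasDerivAt A (ρ w) w := by
    intro w hw
    have h1 : HasDerivAt G (H w) w := (hdiff w hw).2.2.hasDerivAt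
    exact h1.sub (hasDerivAt_lin (2 * p2) (6 * p3) w)
  have hρanti : StrictAntiOn ρ (Set.Ioc 0 δ) := by
    intro x hx y hy hxy
    have := hanti hx hy hxy
    simpa [hρdef, sub_lt_sub_iff_right] using this
  have hρδ : ρ δ = 0 := by rw [hρdef]; simp only; rw [hp3]; ring
  have hCδ : C δ = 0 := by rw [hCdef]; simp only; rw [hp0]; ring
  have hBδ : B δ = 0 := by rw [hBdef]; simp only; rw [hp1]; ring
  have hAδ : A δ = 0 := by rw [hAdef]; simp only; rw [hp2, hp3]; ring
  -- positivity of B on Ioo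
  have hδIoc : δ ∈ Set.Ioc (0:ℝ) δ := ⟨hδ, le_rfl⟩
  have hρpos : ∀ w ∈ Set.Ioo (0:ℝ) δ, 0 < ρ w := by
    intro w hw
    have := hρanti ⟨hw.1, hw.2.le⟩ hδIoc hw.2
    rwa [hρδ] at this
  have hAmono : StrictMonoOn A (Set.Ioc 0 δ) := strictMonoOn_aux hdA hρpos
  have hAneg : ∀ w ∈ Set.Ioo (0:ℝ) δ, A w < 0 := by
    intro w hw
    have := hAmono ⟨hw.1, hw.2.le⟩ hδIoc hw.2
    rwa [hAδ] at this
  have hBanti : StrictAntiOn B (Set.Ioc 0 δ) := strictAntiOn_aux hdB hAneg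
  have hBpos : ∀ w ∈ Set.Ioo (0:ℝ) δ, 0 < B w := by
    intro w hw
    have := hBanti ⟨hw.1, hw.2.le⟩ hδIoc hw.2
    rwa [hBδ] at this
  -- limit of C at 0⁺
  have hftend : Tendsto f (𝓝[>] (0:ℝ)) (𝓝 0) := by
    have h1 : ContinuousWithinAt f (Set.Icc 0 δ) 0 := hcont 0 (Set.left_mem_Icc.mpr hδ.le)
    have h2 : 𝓝[Set.Ioc 0 δ] (0:ℝ) = 𝓝[>] (0:ℝ) := nhdsWithin_Ioc_eq_nhdsGT hδ
    have h3 := h1.tendsto.mono_left (h2 ▸ nhdsWithin_mono 0 Set.Ioc_subset_Icc_self)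
    rwa [hf0] at h3
  have hCtend : Tendsto C (𝓝[>] (0:ℝ)) (𝓝 (-p0)) := by
    have hpoly : Tendsto (fun w : ℝ => p0 + p1 * w + p2 * w ^ 2 + p3 * w ^ 3)
        (𝓝 (0:ℝ)) (𝓝 (p0 + p1 * 0 + p2 * 0 ^ 2 + p3 * 0 ^ 3)) := by
      apply Tendsto.add
      apply Tendsto.add
      apply Tendsto.add
      · exact tendsto_const_nhds
      · exact tendsto_id.const_mul p1
      · exact (tendsto_id.pow 2).const_mul p2
      · exact (tendsto_id.pow 3).const_mul p3
    have h0 : p0 + p1 * (0:ℝ) + p2 * 0 ^ 2 + p3 * 0 ^ 3 = p0 := by ring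
    rw [h0] at hpoly
    have := hftend.sub (hpoly.mono_left nhdsWithin_le_nhds)
    rw [show (0:ℝ) - p0 = -p0 by ring] at this
    exact this
  -- key identity for the goal constant
  have hident : 3 * f δ / δ - 2 * F δ + δ * G δ / 2 = (3 * p0 + δ * p1) / δ := by
    rw [hp0, hp1, hp2, hp3]
    field_simp
    ring
  -- case split on L
  induction L using EReal.rec with
  | bot =>
    exfalso
    set m : ℝ := p1 - |2 * p2| * δ - |3 * p3| * δ ^ 2 with hm
    have hev : ∀ᶠ w in 𝓝[>] (0:ℝ), (m : EReal) ≤ ((F w : ℝ) : EReal) := by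
      filter_upwards [Ioo_mem_nhdsGT_of_mem
        (by constructor <;> linarith : (0:ℝ) ∈ Set.Ico 0 δ)] with w hw
      have hB := hBpos w hw
      have hw1 : (0:ℝ) < w := hw.1
      have hw2 : w < δ := hw.2
      have h1 : -(|2 * p2|) ≤ 2 * p2 := neg_abs_le _
      have h2 : -(|3 * p3|) ≤ 3 * p3 := neg_abs_le _
      have h3 : (0:ℝ) ≤ |2 * p2| := abs_nonneg _
      have h4 : (0:ℝ) ≤ |3 * p3| := abs_nonneg _
      have hwsq : w ^ 2 ≤ δ ^ 2 := by nlinarith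
      have : m ≤ F w := by
        rw [hBdef] at hB
        simp only at hB
        rw [hm]
        nlinarith
      exact_mod_cast EReal.coe_le_coe_iff.mpr this
    have := ge_of_tendsto hL hev
    exact (EReal.bot_lt_coe m).not_ge this
  | coe ℓ =>
    have hFtend : Tendsto F (𝓝[>] (0:ℝ)) (𝓝 ℓ) := by
      rwa [EReal.tendsto_coe] at hL
    have hBtend : Tendsto B (𝓝[>] (0:ℝ)) (𝓝 (ℓ - p1)) := by
      have hpoly : Tendsto (fun w : ℝ => p1 + 2 * p2 * w + 3 * p3 * w ^ 2)
          (𝓝 (0:ℝ)) (𝓝 (p1 + 2 * p2 * 0 + 3 * p3 * 0 ^ 2)) := by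
        apply Tendsto.add
        apply Tendsto.add
        · exact tendsto_const_nhds
        · exact tendsto_id.const_mul _
        · exact (tendsto_id.pow 2).const_mul _
      have h0 : p1 + 2 * p2 * (0:ℝ) + 3 * p3 * 0 ^ 2 = p1 := by ring
      rw [h0] at hpoly
      exact hFtend.sub (hpoly.mono_left nhdsWithin_le_nhds)
    have hkey := key_main hδ hdC hdB hdA hρanti hρδ hCδ hBδ hAδ hCtend hBtend
    rw [EReal.coe_lt_coe_iff]
    rw [hident]
    rw [div_lt_iff₀ hδ]
    nlinarith
  | top =>
    exact EReal.coe_lt_top _
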